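/- Let u be a linear functional on 𝒫 satisfying D_{q,ω}(φu) = ψu, where φ has degree at most 2 and ψ has degree at most 1 (no regularity of u is assumed). Define u^[0] := u, u^[k] := L_{q,ω}(φ·u^[k−1]) and ψ^[0] := ψ, ψ^[k] := D_{q,ω}φ + q·L_{q,ω}ψ^[k−1] for k ≥ 1. Then for every k ≥ 0 the functional equation D_{q,ω}(φ·u^[k]) = ψ^[k]·u^[k] holds in 𝒫*. -/

import Mathlib

open Polynomial

noncomputable section

namespace HahnOPSPaper

/-- The algebraic dual of the space of complex polynomials. -/
abbrev PDual : Type := Module.Dual ℂ (Polynomial ℂ)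

/-- Left multiplication of a functional by a polynomial: `⟨φu, f⟩ = ⟨u, φf⟩`. -/
def pMul (φ : Polynomial ℂ) (u : PDual) : PDual := u ∘ₗ LinearMap.mulLeft ℂ φ

/-- Distributional derivative: `⟨Du, f⟩ = -⟨u, f'⟩`. -/
def dDeriv (u : PDual) : PDual :=
  -(u ∘ₗ (Polynomial.derivative : Polynomial ℂ →ₗ[ℂ] Polynomial ℂ))

/-- The q-bracket `[n]_q = 1 + q + ⋯ + q^(n-1)`. -/
def qBracket (q : ℂ) (n : ℕ) : ℂ := ∑ i ∈ Finset.range n, q ^ i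

/-- q-factorial `[n]_q!`. -/
def qFact (q : ℂ) (n : ℕ) : ℂ := ∏ i ∈ Finset.range n, qBracket q (i + 1)

/-- `D` is Hahn's operator `D_{q,ω}`, i.e. the (unique, for `(q,ω) ≠ (1,0)`) linear operator
with `((q-1)x + ω)·(Df)(x) = f(qx+ω) - f(x)`. -/
def IsHahn (q ω : ℂ) (D : Polynomial ℂ →ₗ[ℂ] Polynomial ℂ) : Prop :=
  ∀ f : Polynomial ℂ, (C (q - 1) * X + C ω) * D f = f.comp (C q * X + C ω) - f

/-- The operator `(L_{q,ω} f)(x) = f(qx + ω)`. -/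
def Lop (q ω : ℂ) : Polynomial ℂ →ₗ[ℂ] Polynomial ℂ :=
  (aeval (C q * X + C ω)).toLinearMap

/-- The distributional Hahn operator `D_{q,ω}` on the dual, built from the ordinary operator
`D*_{q,ω} = D_{1/q,-ω/q}`: `⟨D_{q,ω}u, f⟩ = -q⁻¹·⟨u, D*_{q,ω}f⟩`. -/
def hahnDual (q : ℂ) (Dstar : Polynomial ℂ →ₗ[ℂ] Polynomial ℂ) (u : PDual) : PDual :=
  (-q⁻¹) • (u ∘ₗ Dstar)

/-- The distributional operator `L_{q,ω}`: `⟨L_{q,ω}u, f⟩ = q⁻¹·⟨u, L_{1/q,-ω/q}f⟩`. -/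
def LDual (q ω : ℂ) (u : PDual) : PDual := q⁻¹ • (u ∘ₗ Lop q⁻¹ (-ω / q))

/-- A functional is regular if it admits a monic orthogonal polynomial sequence. -/
def IsRegularFunc (u : PDual) : Prop :=
  ∃ P : ℕ → Polynomial ℂ, (∀ n, (P n).Monic ∧ (P n).natDegree = n) ∧
    (∀ m n, m ≠ n → u (P m * P n) = 0) ∧ (∀ n, u (P n ^ 2) ≠ 0)

/-- `P` is the monic OPS with respect to `u`. -/
def IsMonicOPS (u : PDual) (P : ℕ → Polynomial ℂ) : Prop :=
  (∀ n, (P n).Monic ∧ (P n).natDegree = n) ∧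
    (∀ m n, m ≠ n → u (P m * P n) = 0) ∧ (∀ n, u (P n ^ 2) ≠ 0)

/-- Continuous case: `d_n = d + a·n`. -/
def ddC (a d : ℂ) (n : ℕ) : ℂ := d + a * n

/-- Continuous case: `e_n = e + b·n`. -/
def eeC (b e : ℂ) (n : ℕ) : ℂ := e + b * n

/-- Continuous case: `β_n = n·e_{n-1}/d_{2n-2} - (n+1)·e_n/d_{2n}`. -/
def betaC (a b d e : ℂ) (n : ℕ) : ℂ :=
  n * eeC b e (n - 1) / ddC a d (2 * n - 2) - (n + 1) * eeC b e n / ddC a d (2 * n)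

/-- Continuous case: `γ_{n+1} = -((n+1)·d_{n-1}/(d_{2n-1}·d_{2n+1}))·φ(-e_n/d_{2n})`. -/
def gammaC (a b d e : ℂ) (φ : Polynomial ℂ) (n : ℕ) : ℂ :=
  -((n + 1) * ddC a d (n - 1) / (ddC a d (2 * n - 1) * ddC a d (2 * n + 1))) *
    φ.eval (-(eeC b e n) / ddC a d (2 * n))

/-- `d_n = d·q^n + a·[n]_q`. -/
def ddQ (q a d : ℂ) (n : ℕ) : ℂ := d * q ^ n + a * qBracket q n

/-- `e_n = e·q^n + (ω·d_n + b)·[n]_q`. -/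
def eeQ (q ω a b d e : ℂ) (n : ℕ) : ℂ :=
  e * q ^ n + (ω * ddQ q a d n + b) * qBracket q n

/-- `β_n = ω[n]_q + [n]_q·e_{n-1}/d_{2n-2} - [n+1]_q·e_n/d_{2n}`. -/
def betaQ (q ω a b d e : ℂ) (n : ℕ) : ℂ :=
  ω * qBracket q n + qBracket q n * eeQ q ω a b d e (n - 1) / ddQ q a d (2 * n - 2)
    - qBracket q (n + 1) * eeQ q ω a b d e n / ddQ q a d (2 * n)

/-- `γ_{n+1} = -(q^n·[n+1]_q·d_{n-1}/(d_{2n-1}·d_{2n+1}))·φ(-e_n/d_{2n})`. -/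
def gammaQ (q ω a b d e : ℂ) (φ : Polynomial ℂ) (n : ℕ) : ℂ :=
  -(q ^ n * qBracket q (n + 1) * ddQ q a d (n - 1) /
      (ddQ q a d (2 * n - 1) * ddQ q a d (2 * n + 1))) *
    φ.eval (-(eeQ q ω a b d e n) / ddQ q a d (2 * n))

/-- `Φ(x;n) = ∏_{j=1}^n φ(q^j x + ω[j]_q)`. -/
def PhiQ (q ω : ℂ) (φ : Polynomial ℂ) (n : ℕ) : Polynomial ℂ :=
  ∏ j ∈ Finset.range n, φ.comp (C (q ^ (j + 1)) * X + C (ω * qBracket q (j + 1)))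

/-- `k_n = q^{n(n-3)/2}·∏_{j=0}^{n-1} d_{n+j-1}⁻¹`. -/
def kQ (q a d : ℂ) (n : ℕ) : ℂ :=
  q ^ (((n : ℤ) * ((n : ℤ) - 3)) / 2) * ∏ j ∈ Finset.range n, (ddQ q a d (n + j - 1))⁻¹

private lemma comp_AAs (q ω : ℂ) (hq0 : q ≠ 0) (f : Polynomial ℂ) :
    (f.comp (C q * X + C ω)).comp (C q⁻¹ * X + C (-ω / q)) = f := by
  rw [Polynomial.comp_assoc]
  have : (C q * X + C ω).comp (C q⁻¹ * X + C (-ω / q)) = X := by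
    simp only [add_comp, mul_comp, C_comp, X_comp]
    rw [mul_add, ← mul_assoc, ← C_mul, mul_inv_cancel₀ hq0, ← C_mul]
    have h : q * (-ω / q) = -ω := by field_simp
    rw [h]
    simp [← C_add]
  rw [this, comp_X]

private lemma comp_AsA (q ω : ℂ) (hq0 : q ≠ 0) (f : Polynomial ℂ) :
    (f.comp (C q⁻¹ * X + C (-ω / q))).comp (C q * X + C ω) = f := by
  rw [Polynomial.comp_assoc]
  have h2 : (C q⁻¹ * X + C (-ω / q)).comp (C q * X + C ω) = X := by
    simp only [add_comp, mul_comp, C_comp, X_comp]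
    rw [mul_add, ← mul_assoc, ← C_mul, inv_mul_cancel₀ hq0, ← C_mul]
    have h : q⁻¹ * ω + -ω / q = 0 := by field_simp; ring
    rw [add_assoc, ← C_add, h]
    simp
  rw [h2, comp_X]

private lemma sA_ne_zero (q ω : ℂ) (hqω : q ≠ 1 ∨ ω ≠ 0) :
    (C (q - 1) * X + C ω : Polynomial ℂ) ≠ 0 := by
  intro h
  rcases hqω with h1 | h1
  · have := congrArg (fun p => Polynomial.coeff p 1) h
    simp [coeff_add, coeff_C_mul] at this
    exact h1 (by linear_combination this)
  · have := congrArg (fun p => Polynomial.coeff p 0) h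
    simp at this
    exact h1 this

private lemma sB_eq_sA (q ω : ℂ) (hq0 : q ≠ 0) :
    (C (q⁻¹ - 1) * X + C (-ω / q) : Polynomial ℂ)
      = C (-q⁻¹) * (C (q - 1) * X + C ω) := by
  rw [mul_add, ← mul_assoc, ← C_mul, ← C_mul]
  congr 2 <;> (field_simp; try ring)

private lemma sB_ne_zero (q ω : ℂ) (hq0 : q ≠ 0) (hqω : q ≠ 1 ∨ ω ≠ 0) :
    (C (q⁻¹ - 1) * X + C (-ω / q) : Polynomial ℂ) ≠ 0 := by
  rw [sB_eq_sA q ω hq0]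
  exact mul_ne_zero (by simp [hq0]) (sA_ne_zero q ω hqω)

private lemma sB_compA (q ω : ℂ) (hq0 : q ≠ 0) :
    (C (q⁻¹ - 1) * X + C (-ω / q) : Polynomial ℂ).comp (C q * X + C ω)
      = -(C (q - 1) * X + C ω) := by
  simp only [add_comp, mul_comp, C_comp, X_comp]
  rw [mul_add, ← mul_assoc, ← C_mul, ← C_mul, add_assoc, ← C_add]
  rw [neg_add, ← neg_mul, ← C_neg, ← C_neg]
  congr 2 <;> (field_simp; try ring)

private lemma sB_compAs (q ω : ℂ) (hq0 : q ≠ 0) :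
    (C (q⁻¹ - 1) * X + C (-ω / q) : Polynomial ℂ).comp (C q⁻¹ * X + C (-ω / q))
      = C q⁻¹ * (C (q⁻¹ - 1) * X + C (-ω / q)) := by
  simp only [add_comp, mul_comp, C_comp, X_comp]
  rw [mul_add, ← mul_assoc, ← C_mul, ← C_mul, mul_add, ← mul_assoc, ← C_mul, ← C_mul]
  rw [add_assoc, ← C_add]
  congr 2
  · ring
  · field_simp; ring

private lemma dstar_mul (q ω : ℂ) (hq0 : q ≠ 0) (hqω : q ≠ 1 ∨ ω ≠ 0)
    (Dstar : Polynomial ℂ →ₗ[ℂ] Polynomial ℂ) (hDstar : IsHahn q⁻¹ (-ω / q) Dstar)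
    (g f : Polynomial ℂ) :
    Dstar (g * f) = Dstar g * f + g.comp (C q⁻¹ * X + C (-ω / q)) * Dstar f := by
  apply mul_left_cancel₀ (sB_ne_zero q ω hq0 hqω)
  calc (C (q⁻¹ - 1) * X + C (-ω / q)) * Dstar (g * f)
      = (g * f).comp (C q⁻¹ * X + C (-ω / q)) - g * f := hDstar (g * f)
    _ = (g.comp (C q⁻¹ * X + C (-ω / q)) - g) * f
        + g.comp (C q⁻¹ * X + C (-ω / q)) * (f.comp (C q⁻¹ * X + C (-ω / q)) - f) := by
        rw [mul_comp]; ring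
    _ = ((C (q⁻¹ - 1) * X + C (-ω / q)) * Dstar g) * f
        + g.comp (C q⁻¹ * X + C (-ω / q)) * ((C (q⁻¹ - 1) * X + C (-ω / q)) * Dstar f) := by
        rw [hDstar g, hDstar f]
    _ = (C (q⁻¹ - 1) * X + C (-ω / q))
        * (Dstar g * f + g.comp (C q⁻¹ * X + C (-ω / q)) * Dstar f) := by ring

private lemma dstar_compAs (q ω : ℂ) (hq0 : q ≠ 0) (hqω : q ≠ 1 ∨ ω ≠ 0)
    (Dstar : Polynomial ℂ →ₗ[ℂ] Polynomial ℂ) (hDstar : IsHahn q⁻¹ (-ω / q) Dstar)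
    (f : Polynomial ℂ) :
    Dstar (f.comp (C q⁻¹ * X + C (-ω / q)))
      = C q⁻¹ * (Dstar f).comp (C q⁻¹ * X + C (-ω / q)) := by
  apply mul_left_cancel₀ (sB_ne_zero q ω hq0 hqω)
  have h1 : ((C (q⁻¹ - 1) * X + C (-ω / q)) * Dstar f).comp (C q⁻¹ * X + C (-ω / q))
      = (f.comp (C q⁻¹ * X + C (-ω / q))).comp (C q⁻¹ * X + C (-ω / q))
        - f.comp (C q⁻¹ * X + C (-ω / q)) := by
    rw [hDstar f, sub_comp]
  calc (C (q⁻¹ - 1) * X + C (-ω / q)) * Dstar (f.comp (C q⁻¹ * X + C (-ω / q)))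
      = (f.comp (C q⁻¹ * X + C (-ω / q))).comp (C q⁻¹ * X + C (-ω / q))
        - f.comp (C q⁻¹ * X + C (-ω / q)) := hDstar _
    _ = ((C (q⁻¹ - 1) * X + C (-ω / q)) * Dstar f).comp (C q⁻¹ * X + C (-ω / q)) := h1.symm
    _ = (C (q⁻¹ - 1) * X + C (-ω / q)).comp (C q⁻¹ * X + C (-ω / q))
        * (Dstar f).comp (C q⁻¹ * X + C (-ω / q)) := mul_comp _ _ _
    _ = (C q⁻¹ * (C (q⁻¹ - 1) * X + C (-ω / q)))
        * (Dstar f).comp (C q⁻¹ * X + C (-ω / q)) := by rw [sB_compAs q ω hq0]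
    _ = (C (q⁻¹ - 1) * X + C (-ω / q))
        * (C q⁻¹ * (Dstar f).comp (C q⁻¹ * X + C (-ω / q))) := by ring

private lemma dqw_comp (q ω : ℂ) (hq0 : q ≠ 0) (hqω : q ≠ 1 ∨ ω ≠ 0)
    (Dqw : Polynomial ℂ →ₗ[ℂ] Polynomial ℂ) (hDqw : IsHahn q ω Dqw)
    (Dstar : Polynomial ℂ →ₗ[ℂ] Polynomial ℂ) (hDstar : IsHahn q⁻¹ (-ω / q) Dstar)
    (f : Polynomial ℂ) :
    (Dqw f).comp (C q⁻¹ * X + C (-ω / q)) = Dstar f := by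
  have key : (Dstar f).comp (C q * X + C ω) = Dqw f := by
    apply mul_left_cancel₀ (sA_ne_zero q ω hqω)
    have h1 : ((C (q⁻¹ - 1) * X + C (-ω / q)) * Dstar f).comp (C q * X + C ω)
        = f - f.comp (C q * X + C ω) := by
      rw [hDstar f, sub_comp, comp_AsA q ω hq0 f]
    calc (C (q - 1) * X + C ω) * (Dstar f).comp (C q * X + C ω)
        = -((-(C (q - 1) * X + C ω)) * (Dstar f).comp (C q * X + C ω)) := by ring
      _ = -((C (q⁻¹ - 1) * X + C (-ω / q)).comp (C q * X + C ω)
            * (Dstar f).comp (C q * X + C ω)) := by rw [sB_compA q ω hq0]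
      _ = -(((C (q⁻¹ - 1) * X + C (-ω / q)) * Dstar f).comp (C q * X + C ω)) := by
            rw [mul_comp]
      _ = -(f - f.comp (C q * X + C ω)) := by rw [h1]
      _ = f.comp (C q * X + C ω) - f := by ring
      _ = (C (q - 1) * X + C ω) * Dqw f := (hDqw f).symm
  rw [← key, comp_AAs q ω hq0]

theorem stmt_14 (q ω : ℂ) (hq0 : q ≠ 0) (hqω : q ≠ 1 ∨ ω ≠ 0)
    (hqr : ∀ n : ℕ, 0 < n → q ^ n = 1 → q = 1)
    (φ ψ : Polynomial ℂ) (hφ : φ.natDegree ≤ 2) (hψ : ψ.natDegree ≤ 1)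
    (Dqw : Polynomial ℂ →ₗ[ℂ] Polynomial ℂ) (hDqw : IsHahn q ω Dqw)
    (Dstar : Polynomial ℂ →ₗ[ℂ] Polynomial ℂ) (hDstar : IsHahn q⁻¹ (-ω / q) Dstar)
    (u : PDual)
    (heq : hahnDual q Dstar (pMul φ u) = pMul ψ u)
    (uSeq : ℕ → PDual) (hu0 : uSeq 0 = u)
    (huk : ∀ k : ℕ, uSeq (k + 1) = LDual q ω (pMul φ (uSeq k)))
    (psik : ℕ → Polynomial ℂ) (hps0 : psik 0 = ψ)
    (hpsk : ∀ k : ℕ, psik (k + 1) = Dqw φ + C q * Lop q ω (psik k)) :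
    ∀ k : ℕ, hahnDual q Dstar (pMul φ (uSeq k)) = pMul (psik k) (uSeq k) := by
  have hLop : ∀ g : Polynomial ℂ, Lop q ω g = g.comp (C q * X + C ω) := by
    intro g; simp [Lop, Polynomial.comp, aeval_def, Polynomial.algebraMap_eq]
  have hLD : ∀ (v : PDual) (g : Polynomial ℂ),
      LDual q ω v g = q⁻¹ * v (g.comp (C q⁻¹ * X + C (-ω / q))) := by
    intro v g
    have : Lop q⁻¹ (-ω / q) g = g.comp (C q⁻¹ * X + C (-ω / q)) := by
      simp [Lop, Polynomial.comp, aeval_def, Polynomial.algebraMap_eq]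
    simp [LDual, this]
  intro k
  induction k with
  | zero => rw [hu0, hps0]; exact heq
  | succ k ih =>
    rw [huk k, hpsk k]
    apply LinearMap.ext
    intro f
    have IH : ∀ g : Polynomial ℂ,
        -q⁻¹ * (uSeq k) (φ * Dstar g) = (uSeq k) (psik k * g) :=
      fun g => LinearMap.congr_fun ih g
    have hsm : ∀ (a : ℂ) (p : Polynomial ℂ), (uSeq k) (C a * p) = a * (uSeq k) p := by
      intro a p; rw [← smul_eq_C_mul, map_smul, smul_eq_mul]
    have L : hahnDual q Dstar (pMul φ (LDual q ω (pMul φ (uSeq k)))) f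
        = -q⁻¹ * (q⁻¹ * (uSeq k) (φ * ((φ * Dstar f).comp (C q⁻¹ * X + C (-ω / q))))) := by
      show -q⁻¹ * (LDual q ω (pMul φ (uSeq k))) (φ * Dstar f) = _
      rw [hLD]; rfl
    have R : pMul (Dqw φ + C q * Lop q ω (psik k)) (LDual q ω (pMul φ (uSeq k))) f
        = q⁻¹ * (uSeq k) (φ * (((Dqw φ + C q * Lop q ω (psik k)) * f).comp
            (C q⁻¹ * X + C (-ω / q)))) := by
      show LDual q ω (pMul φ (uSeq k)) ((Dqw φ + C q * Lop q ω (psik k)) * f) = _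
      rw [hLD]; rfl
    have P1 : φ * (((Dqw φ + C q * Lop q ω (psik k)) * f).comp (C q⁻¹ * X + C (-ω / q)))
        = φ * (Dstar φ * f.comp (C q⁻¹ * X + C (-ω / q)))
          + C q * (psik k * (φ * f.comp (C q⁻¹ * X + C (-ω / q)))) := by
      rw [hLop (psik k), mul_comp, add_comp, mul_comp, C_comp, comp_AAs q ω hq0,
        dqw_comp q ω hq0 hqω Dqw hDqw Dstar hDstar]
      ring
    have P2 : φ * Dstar (φ * f.comp (C q⁻¹ * X + C (-ω / q)))
        = φ * (Dstar φ * f.comp (C q⁻¹ * X + C (-ω / q)))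
          + C q⁻¹ * (φ * ((φ * Dstar f).comp (C q⁻¹ * X + C (-ω / q)))) := by
      rw [dstar_mul q ω hq0 hqω Dstar hDstar φ (f.comp (C q⁻¹ * X + C (-ω / q))),
        dstar_compAs q ω hq0 hqω Dstar hDstar f, mul_comp]
      ring
    have e1 : (uSeq k) (φ * (((Dqw φ + C q * Lop q ω (psik k)) * f).comp
          (C q⁻¹ * X + C (-ω / q))))
        = (uSeq k) (φ * (Dstar φ * f.comp (C q⁻¹ * X + C (-ω / q))))
          + q * (uSeq k) (psik k * (φ * f.comp (C q⁻¹ * X + C (-ω / q)))) := by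
      rw [P1, map_add, hsm]
    have e2 : (uSeq k) (φ * Dstar (φ * f.comp (C q⁻¹ * X + C (-ω / q))))
        = (uSeq k) (φ * (Dstar φ * f.comp (C q⁻¹ * X + C (-ω / q))))
          + q⁻¹ * (uSeq k) (φ * ((φ * Dstar f).comp (C q⁻¹ * X + C (-ω / q)))) := by
      rw [P2, map_add, hsm]
    have e3 := IH (φ * f.comp (C q⁻¹ * X + C (-ω / q)))
    rw [L, R, e1, ← e3, e2]
    field_simp
    ring


end HahnOPSPaper
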